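/- Let A be an integral domain, f₁,…,fₙ pairwise non-associated prime elements of A, r₁,…,rₙ ≥ 1, and f = f₁^{r₁}⋯fₙ^{rₙ}. Then the map θ : Aˣ × ℕⁿ → (A, ·) defined by θ(u, (a₁,…,aₙ)) = u·f₁^{a₁}⋯fₙ^{aₙ} is an injective homomorphism of commutative monoids whose image is exactly the submonoid M = A ∩ A[f⁻¹]ˣ of elements of A whose image in the localization A[f⁻¹] is a unit. In particular M ≅ Aˣ × ℕⁿ as commutative monoids. -/
import Mathlib

section Aux

variable {A : Type*} [CommRing A] [IsDomain A]

/-- If `p` is prime, `¬ p ∣ x` and `x ∣ p * d`, then `x ∣ d`. -/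
lemma aux_dvd_of_dvd_mul_prime {p x d : A} (hp : Prime p) (hpx : ¬ p ∣ x)
    (h : x ∣ p * d) : x ∣ d := by
  obtain ⟨e, he⟩ := h
  have hpe : p ∣ x * e := ⟨d, by linear_combination -he⟩
  rcases hp.dvd_mul.mp hpe with h | h
  · exact absurd h hpx
  · obtain ⟨e', rfl⟩ := h
    refine ⟨e', ?_⟩
    have : p * d = p * (x * e') := by linear_combination he
    exact mul_left_cancel₀ hp.ne_zero this

/-- Structure of divisors of `p ^ k * c` when `p` is prime and `p ∤ c`. -/
lemma aux_dvd_pow_mul {p c : A} (hp : Prime p) (hpc : ¬ p ∣ c) :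
    ∀ (k : ℕ) (x : A), x ∣ p ^ k * c → ∃ j ≤ k, ∃ y, x = p ^ j * y ∧ y ∣ c := by
  intro k
  induction k with
  | zero => intro x hx; exact ⟨0, le_rfl, x, by ring, by simpa using hx⟩
  | succ k ih =>
    intro x hx
    by_cases hpx : p ∣ x
    · obtain ⟨x', rfl⟩ := hpx
      have : x' ∣ p ^ k * c := by
        have h2 : p * x' ∣ p * (p ^ k * c) := by
          rw [show p * (p ^ k * c) = p ^ (k + 1) * c by ring]; exact hx
        exact (mul_dvd_mul_iff_left hp.ne_zero).mp h2
      obtain ⟨j, hj, y, hy, hyc⟩ := ih x' this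
      exact ⟨j + 1, by omega, y, by rw [hy]; ring, hyc⟩
    · have : x ∣ p ^ k * c := by
        refine aux_dvd_of_dvd_mul_prime hp hpx ?_
        rw [show p * (p ^ k * c) = p ^ (k + 1) * c by ring]; exact hx
      obtain ⟨j, hj, y, hy, hyc⟩ := ih x this
      exact ⟨j, by omega, y, hy, hyc⟩

lemma aux_not_dvd_pow {p q : A} (hp : Prime p) (hq : Prime q)
    (h : ¬ Associated p q) (m : ℕ) : ¬ p ∣ q ^ m := fun hd =>
  h (hp.associated_of_dvd hq (hp.dvd_of_dvd_pow hd))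

/-- Divisors of products of prime powers. -/
lemma aux_structure {n : ℕ} {f₀ : Fin n → A} (hprime : ∀ i, Prime (f₀ i))
    (hassoc : ∀ i j, i ≠ j → ¬ Associated (f₀ i) (f₀ j)) (s : Fin n → ℕ)
    (t : Finset (Fin n)) :
    ∀ x : A, x ∣ ∏ i ∈ t, f₀ i ^ s i →
      ∃ (u : Aˣ) (a : Fin n → ℕ), x = (u : A) * ∏ i ∈ t, f₀ i ^ a i := by
  classical
  induction t using Finset.induction with
  | empty =>
    intro x hx
    simp only [Finset.prod_empty] at hx ⊢
    obtain ⟨u, rfl⟩ := isUnit_of_dvd_one hx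
    exact ⟨u, 0, by simp⟩
  | @insert j t hj ih =>
    intro x hx
    rw [Finset.prod_insert hj] at hx
    have hpc : ¬ f₀ j ∣ ∏ i ∈ t, f₀ i ^ s i := by
      refine (hprime j).not_dvd_finset_prod ?_
      intro i hi
      exact aux_not_dvd_pow (hprime j) (hprime i)
        (hassoc j i (fun h => hj (by rw [h]; exact hi))) (s i)
    obtain ⟨k, _, y, rfl, hyc⟩ := aux_dvd_pow_mul (hprime j) hpc (s j) x hx
    obtain ⟨u, a, rfl⟩ := ih y hyc
    refine ⟨u, Function.update a j k, ?_⟩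
    rw [Finset.prod_insert hj, Function.update_self]
    have : ∏ i ∈ t, f₀ i ^ Function.update a j k i = ∏ i ∈ t, f₀ i ^ a i := by
      refine Finset.prod_congr rfl fun i hi => ?_
      rw [Function.update_of_ne (fun h => hj (by rw [← h]; exact hi))]
    rw [this]; ring

end Aux

/-- For pairwise non-associated primes `f₁, …, fₙ` of an integral domain `A` and
`f = f₁^{r₁} ⋯ fₙ^{rₙ}` with all `rᵢ ≥ 1`, the map `(u, (a₁,…,aₙ)) ↦ u·f₁^{a₁}⋯fₙ^{aₙ}`
is an injective monoid homomorphism `Aˣ × ℕⁿ → (A, ·)` whose image is exactly the submonoid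
`M = A ∩ A[f⁻¹]ˣ` of elements of `A` mapping to units of the localization `A[f⁻¹]`. -/
theorem exists_monoidHom_units_pow_primes {A : Type*} [CommRing A] [IsDomain A]
    (n : ℕ) (f₀ : Fin n → A) (hprime : ∀ i, Prime (f₀ i))
    (hassoc : ∀ i j, i ≠ j → ¬ Associated (f₀ i) (f₀ j))
    (r : Fin n → ℕ) (hr : ∀ i, 1 ≤ r i)
    (f : A) (hf : f = ∏ i, f₀ i ^ r i) :
    ∃ θ : Aˣ × Multiplicative (Fin n → ℕ) →* A,
      (∀ (u : Aˣ) (a : Fin n → ℕ),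
        θ (u, Multiplicative.ofAdd a) = (u : A) * ∏ i, f₀ i ^ a i) ∧
      Function.Injective θ ∧
      Set.range θ = {x : A | IsUnit (algebraMap A (Localization.Away f) x)} := by
  classical
  set θ : Aˣ × Multiplicative (Fin n → ℕ) →* A :=
    { toFun := fun p => (p.1 : A) * ∏ i, f₀ i ^ (Multiplicative.toAdd p.2) i
      map_one' := by simp
      map_mul' := by
        rintro ⟨u, a⟩ ⟨v, b⟩
        simp only [Prod.fst_mul, Prod.snd_mul, Units.val_mul]
        rw [show Multiplicative.toAdd (a * b) = Multiplicative.toAdd a + Multiplicative.toAdd b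
          from rfl]
        simp only [Pi.add_apply, pow_add, Finset.prod_mul_distrib]
        ring } with hθ
  have hθval : ∀ (u : Aˣ) (a : Fin n → ℕ),
      θ (u, Multiplicative.ofAdd a) = (u : A) * ∏ i, f₀ i ^ a i := fun u a => rfl
  have hf0ne : ∀ i, f₀ i ≠ 0 := fun i => (hprime i).ne_zero
  -- key: equality of normal forms forces equality
  have hkey : ∀ (u v : Aˣ) (a b : Fin n → ℕ),
      (u : A) * ∏ i, f₀ i ^ a i = (v : A) * ∏ i, f₀ i ^ b i → a = b ∧ u = v := by
    intro u v a b h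
    have hab : a = b := by
      funext i
      by_contra hne
      -- wlog a i < b i
      wlog hlt : a i < b i generalizing u v a b
      · exact this v u b a h.symm (Ne.symm hne) (by omega)
      · -- f₀ i ^ (a i + 1) divides lhs
        have hdvd : f₀ i ^ (a i + 1) ∣ (u : A) * ∏ j, f₀ j ^ a j := by
          rw [h]
          have h1 : f₀ i ^ (a i + 1) ∣ f₀ i ^ b i := pow_dvd_pow _ (by omega)
          have h2 : f₀ i ^ b i ∣ ∏ j, f₀ j ^ b j :=
            Finset.dvd_prod_of_mem _ (Finset.mem_univ i)
          exact (h1.trans h2).mul_left _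
        have hsplit : (u : A) * ∏ j, f₀ j ^ a j =
            f₀ i ^ a i * ((u : A) * ∏ j ∈ Finset.univ.erase i, f₀ j ^ a j) := by
          rw [← Finset.mul_prod_erase Finset.univ _ (Finset.mem_univ i)]; ring
        rw [hsplit, pow_succ'] at hdvd
        have hcancel : f₀ i ∣ (u : A) * ∏ j ∈ Finset.univ.erase i, f₀ j ^ a j := by
          obtain ⟨d, hd⟩ := hdvd
          have : f₀ i ^ a i * ((u : A) * ∏ j ∈ Finset.univ.erase i, f₀ j ^ a j)
              = f₀ i ^ a i * (f₀ i * d) := by linear_combination hd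
          exact ⟨d, mul_left_cancel₀ (pow_ne_zero _ (hf0ne i)) this⟩
        rcases (hprime i).dvd_mul.mp hcancel with hc | hc
        · exact (hprime i).not_unit (isUnit_of_dvd_unit hc u.isUnit)
        · obtain ⟨j, hj, hjd⟩ := ((hprime i).dvd_finset_prod_iff _).mp hc
          exact aux_not_dvd_pow (hprime i) (hprime j)
            (hassoc i j (fun hij => (Finset.mem_erase.mp hj).1 hij.symm)) (a j) hjd
    refine ⟨hab, ?_⟩
    subst hab
    have hprod : (∏ i, f₀ i ^ a i) ≠ 0 :=
      Finset.prod_ne_zero_iff.mpr fun i _ => pow_ne_zero _ (hf0ne i)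
    ext
    exact mul_right_cancel₀ hprod h
  refine ⟨θ, hθval, ?_, ?_⟩
  · rintro ⟨u, a⟩ ⟨v, b⟩ h
    obtain ⟨hab, huv⟩ := hkey u v (Multiplicative.toAdd a) (Multiplicative.toAdd b) h
    exact Prod.ext huv (Multiplicative.toAdd.injective hab)
  · ext x
    simp only [Set.mem_range, Set.mem_setOf_eq]
    constructor
    · rintro ⟨⟨u, a⟩, rfl⟩
      have : θ (u, a) = (u : A) * ∏ i, f₀ i ^ (Multiplicative.toAdd a) i := rfl
      rw [this, map_mul, map_prod]
      refine ((algebraMap A (Localization.Away f)).isUnit_map u.isUnit).mul ?_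
      refine Finset.prod_induction _ IsUnit (fun _ _ => IsUnit.mul) isUnit_one
        fun i _ => ?_
      rw [map_pow]
      refine IsUnit.pow _ ?_
      refine IsLocalization.Away.isUnit_of_dvd f ?_
      rw [hf]
      exact (dvd_pow_self (f₀ i) (by have := hr i; omega)).trans
        (Finset.dvd_prod_of_mem _ (Finset.mem_univ i))
    · intro hx
      -- x divides some power of f
      obtain ⟨w, hw⟩ := hx
      obtain ⟨m, b, hb⟩ := IsLocalization.Away.surj (S := Localization.Away f) f (↑w⁻¹)
      have heq : algebraMap A (Localization.Away f) (x * b) =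
          algebraMap A (Localization.Away f) (f ^ m) := by
        rw [map_mul, ← hw, map_pow]
        calc (w : Localization.Away f) * algebraMap A (Localization.Away f) b
            = w * (↑w⁻¹ * algebraMap A (Localization.Away f) f ^ m) := by rw [hb]
          _ = algebraMap A (Localization.Away f) f ^ m := by
              rw [← mul_assoc, Units.mul_inv, one_mul]
      obtain ⟨k, hk⟩ := IsLocalization.Away.exists_of_eq (S := Localization.Away f) f heq
      have hxdvd : x ∣ f ^ (k + m) := ⟨f ^ k * b, by rw [pow_add]; linear_combination -hk⟩
      have hxdvd' : x ∣ ∏ i, f₀ i ^ (r i * (k + m)) := by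
        rw [hf, ← Finset.prod_pow] at hxdvd
        simpa only [← pow_mul] using hxdvd
      obtain ⟨u, a, rfl⟩ := aux_structure hprime hassoc _ Finset.univ x hxdvd'
      exact ⟨(u, Multiplicative.ofAdd a), rfl⟩
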